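/- Let σ be an acyclic cycle signature and σ* an acyclic cocycle signature of a connected finite graph G, and let O⃗ be an orientation. Then there exists a unique (σ,σ*)-compatible orientation O⃗^cp in the cycle-cocycle reversal class of O⃗, and moreover O⃗ is obtained from O⃗^cp by reversing a collection of pairwise edge-disjoint directed cycles and directed cocycles contained in O⃗^cp. -/

import Mathlib

open Function

namespace GB

structure Graph where
  V : Type
  E : Type
  [fV : Fintype V]
  [fE : Fintype E]
  [dV : DecidableEq V]
  [dE : DecidableEq E]
  tail : E → V
  head : E → V

attribute [instance] Graph.fV Graph.fE Graph.dV Graph.dE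

variable (G : Graph)

/-- Incidence matrix with respect to the reference orientation. -/
def incMat : Matrix G.V G.E ℝ := fun v e =>
  (if G.head e = v then 1 else 0) - (if G.tail e = v then 1 else 0)

/-- The incidence linear map. -/
noncomputable def DMap : (G.E → ℝ) →ₗ[ℝ] (G.V → ℝ) := (incMat G).mulVecLin

/-- Cycle space: kernel of the incidence matrix (equal to ker of D with a row removed). -/
noncomputable def cycleSpace : Submodule ℝ (G.E → ℝ) := LinearMap.ker (DMap G)

/-- Cocycle space: row space of the incidence matrix (= im(D^T) for connected G). -/
noncomputable def cocycleSpace : Submodule ℝ (G.E → ℝ) :=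
  LinearMap.range ((incMat G).transpose.mulVecLin)

def Connected : Prop :=
  ∀ f : G.V → ℝ, (∀ e, f (G.head e) = f (G.tail e)) → ∀ v w, f v = f w

/-- a {0,±1}-vector -/
def IsZPM (x : G.E → ℝ) : Prop := ∀ e, x e = 0 ∨ x e = 1 ∨ x e = -1

/-- A directed cycle, identified with a support-minimal nonzero {0,±1}-vector of the
cycle space (a signed circuit of the graphic matroid). -/
def IsDirCycle (x : G.E → ℝ) : Prop :=
  x ∈ cycleSpace G ∧ x ≠ 0 ∧ IsZPM G x ∧
    ∀ y ∈ cycleSpace G, y ≠ 0 → support y ⊆ support x → support y = support x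

/-- A directed cocycle (signed cocircuit). -/
def IsDirCocycle (x : G.E → ℝ) : Prop :=
  x ∈ cocycleSpace G ∧ x ≠ 0 ∧ IsZPM G x ∧
    ∀ y ∈ cocycleSpace G, y ≠ 0 → support y ⊆ support x → support y = support x

def IsCycle (C : Set G.E) : Prop := ∃ x, IsDirCycle G x ∧ support x = C
def IsCocycle (C : Set G.E) : Prop := ∃ x, IsDirCocycle G x ∧ support x = C

/-- Orientations are identified with {0,1}-vectors, (1,…,1) being the reference orientation. -/
def IsOrientation (O : G.E → ℝ) : Prop := ∀ e, O e = 0 ∨ O e = 1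

/-- the ±1 direction of edge e in orientation O -/
def dir (O : G.E → ℝ) (e : G.E) : ℝ := 2 * O e - 1

/-- the signed vector x (e.g. a directed cycle or partial orientation) is contained in O -/
def InOrient (x O : G.E → ℝ) : Prop := ∀ e, x e = 0 ∨ x e = dir G O e

def IsIntVec (x : G.E → ℝ) : Prop := ∀ e, ∃ n : ℤ, x e = (n : ℝ)

/-- x is a sum of pairwise edge-disjoint directed cycles -/
def SumDisjDirCycles (x : G.E → ℝ) : Prop :=
  ∃ (n : ℕ) (c : Fin n → (G.E → ℝ)), (∀ i, IsDirCycle G (c i)) ∧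
    (∀ i j, i ≠ j → Disjoint (support (c i)) (support (c j))) ∧ x = ∑ i, c i

/-- x is a sum of pairwise edge-disjoint directed cocycles -/
def SumDisjDirCocycles (x : G.E → ℝ) : Prop :=
  ∃ (n : ℕ) (c : Fin n → (G.E → ℝ)), (∀ i, IsDirCocycle G (c i)) ∧
    (∀ i j, i ≠ j → Disjoint (support (c i)) (support (c j))) ∧ x = ∑ i, c i

/-- A cycle signature: a choice of direction for each cycle. -/
structure CycSig (G : Graph) where
  s : Set G.E → (G.E → ℝ)
  mem : ∀ C, IsCycle G C → IsDirCycle G (s C) ∧ support (s C) = C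

/-- A cocycle signature. -/
structure CocycSig (G : Graph) where
  s : Set G.E → (G.E → ℝ)
  mem : ∀ C, IsCocycle G C → IsDirCocycle G (s C) ∧ support (s C) = C

open Classical in
/-- σ is acyclic: no nontrivial nonnegative combination of the σ(C) vanishes. -/
noncomputable def AcyclicSig (σ : CycSig G) : Prop :=
  ∀ a : Set G.E → ℝ, (∀ C, 0 ≤ a C) →
    ∑ C ∈ Finset.univ.filter (fun C => IsCycle G C), a C • σ.s C = 0 →
    ∀ C, IsCycle G C → a C = 0

open Classical in
noncomputable def AcyclicCosig (σ : CocycSig G) : Prop :=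
  ∀ a : Set G.E → ℝ, (∀ C, 0 ≤ a C) →
    ∑ C ∈ Finset.univ.filter (fun C => IsCocycle G C), a C • σ.s C = 0 →
    ∀ C, IsCocycle G C → a C = 0

/-- O is σ-compatible: every directed cycle in O is the chosen one. -/
def SigCompatible (σ : CycSig G) (O : G.E → ℝ) : Prop :=
  ∀ x, IsDirCycle G x → InOrient G x O → x = σ.s (support x)

def CosigCompatible (σ : CocycSig G) (O : G.E → ℝ) : Prop :=
  ∀ x, IsDirCocycle G x → InOrient G x O → x = σ.s (support x)

def Compatible (σc : CycSig G) (σs : CocycSig G) (O : G.E → ℝ) : Prop :=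
  SigCompatible G σc O ∧ CosigCompatible G σs O

/-- one step of cycle reversal -/
def CycRev (O O' : G.E → ℝ) : Prop :=
  ∃ x, IsDirCycle G x ∧ InOrient G x O ∧ O' = O - x

/-- cycle reversal equivalence -/
def SameCycClass : (G.E → ℝ) → (G.E → ℝ) → Prop := Relation.EqvGen (CycRev G)

/-- one step of cycle or cocycle reversal -/
def CCRev (O O' : G.E → ℝ) : Prop :=
  ∃ x, (IsDirCycle G x ∨ IsDirCocycle G x) ∧ InOrient G x O ∧ O' = O - x

/-- cycle-cocycle reversal equivalence -/
def SameCCClass : (G.E → ℝ) → (G.E → ℝ) → Prop := Relation.EqvGen (CCRev G)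

/-- x is the directed fundamental cycle of e ∉ T, directed along the reference arc of e -/
def FundCycle (T : Finset G.E) (e : G.E) (x : G.E → ℝ) : Prop :=
  IsDirCycle G x ∧ x e = 1 ∧ support x ⊆ insert e (↑T : Set G.E)

/-- x is the directed fundamental cocycle of e ∈ T -/
def FundCocycle (T : Finset G.E) (e : G.E) (x : G.E → ℝ) : Prop :=
  IsDirCocycle G x ∧ x e = 1 ∧ support x ⊆ insert e ((↑T : Set G.E)ᶜ)

/-- T is a spanning tree: it contains no cycle and its complement contains no cocycle. -/
def IsSpanningTree (T : Finset G.E) : Prop :=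
  (∀ x, IsDirCycle G x → ¬ support x ⊆ (↑T : Set G.E)) ∧
  (∀ x, IsDirCocycle G x → ¬ support x ⊆ ((↑T : Set G.E)ᶜ))

/-- O = g_{σ,σ*}(T): each e ∉ T is oriented along σ(C(T,e)), each e ∈ T along σ*(C*(T,e)). -/
def GOrient (σc : CycSig G) (σs : CocycSig G) (T : Finset G.E) (O : G.E → ℝ) : Prop :=
  IsOrientation G O ∧
  (∀ e ∉ T, ∀ x, FundCycle G T e x → dir G O e = σc.s (support x) e) ∧
  (∀ e ∈ T, ∀ x, FundCocycle G T e x → dir G O e = σs.s (support x) e)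

/-- φ_{σ,σ*}(O) = S : O is obtained from the compatible orientation O^cp = g(T) by reversing
disjoint directed cycles c i and cocycles d j, and S = T ∪ (⊎ C_i) \ (⊎ C*_j). -/
def PhiRel (σc : CycSig G) (σs : CocycSig G) (O : G.E → ℝ) (S : Set G.E) : Prop :=
  ∃ (T : Finset G.E) (Ocp : G.E → ℝ) (n m : ℕ)
    (c : Fin n → (G.E → ℝ)) (d : Fin m → (G.E → ℝ)),
    IsSpanningTree G T ∧ Compatible G σc σs Ocp ∧ GOrient G σc σs T Ocp ∧
    (∀ i, IsDirCycle G (c i) ∧ InOrient G (c i) Ocp) ∧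
    (∀ j, IsDirCocycle G (d j) ∧ InOrient G (d j) Ocp) ∧
    (∀ i j, i ≠ j → Disjoint (support (c i)) (support (c j))) ∧
    (∀ i j, i ≠ j → Disjoint (support (d i)) (support (d j))) ∧
    (∀ i j, Disjoint (support (c i)) (support (d j))) ∧
    O = Ocp - (∑ i, c i) - (∑ j, d j) ∧
    S = ((↑T : Set G.E) ∪ (⋃ i, support (c i))) \ (⋃ j, support (d j))


/-- the cube of continuous orientations -/
def cube : Set (G.E → ℝ) := {x | ∀ e, 0 ≤ x e ∧ x e ≤ 1}

/-- x is a σ-compatible continuous orientation -/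
def ContSigCompat (σ : CycSig G) (x : G.E → ℝ) : Prop :=
  x ∈ cube G ∧ ∀ ε : ℝ, 0 < ε → ∀ C, IsCycle G C → x + ε • σ.s C ∉ cube G

/-- S̃_σ = S_σ + (im(D^T) ∩ ℤ^E) -/
def Stilde (σ : CycSig G) : Set (G.E → ℝ) :=
  {x | ∃ s, ContSigCompat G σ s ∧ ∃ v, v ∈ cocycleSpace G ∧ IsIntVec G v ∧ x = s + v}

end GB

namespace GB

open Matrix in
lemma _dummy_true : True := trivial

open Matrix

variable {G : Graph}

lemma mem_cycleSpace_iff {x : G.E → ℝ} :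
    x ∈ cycleSpace G ↔ ∀ v, ∑ e, incMat G v e * x e = 0 := by
  constructor
  · intro h v
    have := congrFun (LinearMap.mem_ker.mp h) v
    simpa [DMap, Matrix.mulVecLin_apply, Matrix.mulVec, dotProduct] using this
  · intro h
    refine LinearMap.mem_ker.mpr (funext fun v => ?_)
    simpa [DMap, Matrix.mulVecLin_apply, Matrix.mulVec, dotProduct] using h v

lemma mem_cocycleSpace_iff {x : G.E → ℝ} :
    x ∈ cocycleSpace G ↔ ∃ f : G.V → ℝ, x = (incMat G).transpose.mulVec f := by
  constructor
  · rintro ⟨f, rfl⟩; exact ⟨f, rfl⟩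
  · rintro ⟨f, rfl⟩; exact ⟨f, rfl⟩

lemma cycle_cocycle_dot {z b : G.E → ℝ} (hz : z ∈ cycleSpace G) (hb : b ∈ cocycleSpace G) :
    ∑ e, z e * b e = 0 := by
  obtain ⟨f, rfl⟩ := mem_cocycleSpace_iff.mp hb
  have hz' : (incMat G).mulVec z = 0 := LinearMap.mem_ker.mp hz
  calc ∑ e, z e * ((incMat G).transpose.mulVec f) e
      = z ⬝ᵥ ((incMat G).transpose.mulVec f) := rfl
    _ = ((incMat G).transpose.vecMul z) ⬝ᵥ f := Matrix.dotProduct_mulVec _ _ _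
    _ = ((incMat G).mulVec z) ⬝ᵥ f := by rw [Matrix.vecMul_transpose]
    _ = 0 := by rw [hz']; simp [dotProduct]

lemma cycle_cocycle_inter {z : G.E → ℝ} (hz : z ∈ cycleSpace G) (hb : z ∈ cocycleSpace G) :
    z = 0 := by
  have h := cycle_cocycle_dot hz hb
  funext e
  have h2 : ∀ e ∈ Finset.univ (α := G.E), z e * z e = 0 := by
    refine (Finset.sum_eq_zero_iff_of_nonneg (fun e _ => mul_self_nonneg (z e))).mp h
  have := h2 e (Finset.mem_univ e)
  exact mul_self_eq_zero.mp this

/-- Support-minimal {0,±1} vectors with equal supports agree up to sign. -/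
lemma same_support_pm {M : Submodule ℝ (G.E → ℝ)} {x y : G.E → ℝ}
    (hxM : x ∈ M) (hx0 : x ≠ 0) (hxz : IsZPM G x)
    (hxmin : ∀ y ∈ M, y ≠ 0 → support y ⊆ support x → support y = support x)
    (hyM : y ∈ M) (hyz : IsZPM G y) (hsupp : support y = support x) :
    x = y ∨ x = -y := by
  obtain ⟨e, he⟩ : ∃ e, x e ≠ 0 := by
    by_contra h; push_neg at h; exact hx0 (funext h)
  have hye : y e ≠ 0 := by
    have : e ∈ support x := he
    rw [← hsupp] at this; exact this
  have hy2 : y e * y e = 1 := by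
    rcases hyz e with h | h | h
    · exact absurd h hye
    · rw [h]; ring
    · rw [h]; ring
  set c : ℝ := x e * y e with hc
  set w : G.E → ℝ := x - c • y with hw
  have hwe : w e = 0 := by
    simp only [hw, Pi.sub_apply, Pi.smul_apply, smul_eq_mul, hc]
    have : x e * y e * y e = x e * (y e * y e) := by ring
    rw [this, hy2]; ring
  have hwM : w ∈ M := Submodule.sub_mem M hxM (Submodule.smul_mem M c hyM)
  have hwsupp : support w ⊆ support x := by
    intro e' he'
    by_contra hx'
    have hx'0 : x e' = 0 := by simpa [Function.mem_support, not_not] using hx'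
    have hy'0 : y e' = 0 := by
      have : e' ∉ support y := by rw [hsupp]; simpa [Function.mem_support, not_not] using hx'
      simpa [Function.mem_support, not_not] using this
    have : w e' = 0 := by simp [hw, hx'0, hy'0]
    exact he' this
  have hw0 : w = 0 := by
    by_contra hw0
    have := hxmin w hwM hw0 hwsupp
    have : e ∈ support w := by rw [this]; exact he
    exact this hwe
  have hxy : x = c • y := by
    have := sub_eq_zero.mp hw0
    exact this
  rcases hxz e with h | h | h
  · exact absurd h he
  · rcases hyz e with h' | h' | h'
    · exact absurd h' hye
    · left; rw [hxy, hc, h, h']; simp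
    · right; rw [hxy, hc, h, h']; funext e'; simp
  · rcases hyz e with h' | h' | h'
    · exact absurd h' hye
    · right; rw [hxy, hc, h, h']; funext e'; simp
    · left; rw [hxy, hc, h, h']; simp

/-- Subtracting a contained signed vector preserves orientations. -/
lemma orient_sub {O x : G.E → ℝ} (hO : IsOrientation G O) (hx : InOrient G x O) :
    IsOrientation G (O - x) := by
  intro e
  rcases hx e with h | h
  · simp [h]; exact hO e
  · rcases hO e with h' | h' <;> simp [h, dir, h'] <;> norm_num

lemma isIntVec_of_zpm {x : G.E → ℝ} (hx : IsZPM G x) : IsIntVec G x := by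
  intro e
  rcases hx e with h | h | h
  · exact ⟨0, by simp [h]⟩
  · exact ⟨1, by simp [h]⟩
  · exact ⟨-1, by simp [h]⟩

lemma isIntVec_add {x y : G.E → ℝ} (hx : IsIntVec G x) (hy : IsIntVec G y) :
    IsIntVec G (x + y) := by
  intro e
  obtain ⟨n, hn⟩ := hx e; obtain ⟨m, hm⟩ := hy e
  exact ⟨n + m, by push_cast [Pi.add_apply, hn, hm]; ring⟩

lemma isIntVec_neg {x : G.E → ℝ} (hx : IsIntVec G x) : IsIntVec G (-x) := by
  intro e
  obtain ⟨n, hn⟩ := hx e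
  exact ⟨-n, by push_cast [Pi.neg_apply, hn]; ring⟩

lemma isIntVec_zero : IsIntVec G (0 : G.E → ℝ) := fun _ => ⟨0, by simp⟩

/-- The difference of two CC-equivalent vectors is an integral cycle part plus an
integral cocycle part. -/
lemma sameCCClass_diff {O₁ O₂ : G.E → ℝ} (h : SameCCClass G O₁ O₂) :
    ∃ z b : G.E → ℝ, z ∈ cycleSpace G ∧ b ∈ cocycleSpace G ∧
      IsIntVec G z ∧ IsIntVec G b ∧ O₁ - O₂ = z + b := by
  induction h with
  | rel O O' hr =>
    obtain ⟨x, hx, _, rfl⟩ := hr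
    rcases hx with hx | hx
    · exact ⟨x, 0, hx.1, Submodule.zero_mem _, isIntVec_of_zpm hx.2.2.1, isIntVec_zero,
        by abel⟩
    · exact ⟨0, x, Submodule.zero_mem _, hx.1, isIntVec_zero, isIntVec_of_zpm hx.2.2.1,
        by abel⟩
  | refl O => exact ⟨0, 0, Submodule.zero_mem _, Submodule.zero_mem _,
      isIntVec_zero, isIntVec_zero, by abel⟩
  | symm O O' _ ih =>
    obtain ⟨z, b, hz, hb, hzi, hbi, hd⟩ := ih
    refine ⟨-z, -b, Submodule.neg_mem _ hz, Submodule.neg_mem _ hb,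
      isIntVec_neg hzi, isIntVec_neg hbi, ?_⟩
    have : O' - O = -(O - O') := by abel
    rw [this, hd]; abel
  | trans O O' O'' _ _ ih₁ ih₂ =>
    obtain ⟨z₁, b₁, hz₁, hb₁, hzi₁, hbi₁, hd₁⟩ := ih₁
    obtain ⟨z₂, b₂, hz₂, hb₂, hzi₂, hbi₂, hd₂⟩ := ih₂
    refine ⟨z₁ + z₂, b₁ + b₂, Submodule.add_mem _ hz₁ hz₂, Submodule.add_mem _ hb₁ hb₂,
      isIntVec_add hzi₁ hzi₂, isIntVec_add hbi₁ hbi₂, ?_⟩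
    have : O - O'' = (O - O') + (O' - O'') := by abel
    rw [this, hd₁, hd₂]; abel

lemma abs_le_sq_of_int {t : ℝ} (h : ∃ n : ℤ, t = n) : |t| ≤ t ^ 2 := by
  obtain ⟨n, rfl⟩ := h
  rcases eq_or_ne n 0 with rfl | hn
  · simp
  · have h1 : (1 : ℤ) ≤ |n| := by
      have := abs_pos.mpr hn
      omega
    have h1' : (1 : ℝ) ≤ |(n : ℝ)| := by
      rw [← Int.cast_abs]; exact_mod_cast h1
    nlinarith [sq_abs ((n : ℝ)), abs_nonneg ((n : ℝ))]

/-- If an integral z plus an integral b orthogonal to it is a {0,±1} vector, then at each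
coordinate one of them vanishes and the other equals the sum. -/
lemma split_zpm {z b u : G.E → ℝ} (hdot : ∑ e, z e * b e = 0)
    (hzi : IsIntVec G z) (hbi : IsIntVec G b) (hu : IsZPM G u) (huzb : u = z + b) :
    ∀ e, (z e = u e ∧ b e = 0) ∨ (z e = 0 ∧ b e = u e) := by
  have habsz : ∀ e, |z e| ≤ z e ^ 2 := fun e => abs_le_sq_of_int (hzi e)
  have habsb : ∀ e, |b e| ≤ b e ^ 2 := fun e => abs_le_sq_of_int (hbi e)
  have hue : ∀ e, u e = z e + b e := fun e => by rw [huzb]; rfl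
  have huabs : ∀ e, (z e + b e) ^ 2 = |z e + b e| := by
    intro e
    rcases hu e with h | h | h <;> rw [← hue e, h] <;> norm_num
  have hsum1 : ∑ e, (z e ^ 2 + b e ^ 2) = ∑ e, (z e + b e) ^ 2 := by
    calc ∑ e, (z e ^ 2 + b e ^ 2)
        = ∑ e, ((z e + b e) ^ 2 - 2 * (z e * b e)) :=
          Finset.sum_congr rfl (by intro e _; ring)
      _ = ∑ e, (z e + b e) ^ 2 - 2 * ∑ e, (z e * b e) := by
          rw [Finset.sum_sub_distrib, Finset.mul_sum]
      _ = ∑ e, (z e + b e) ^ 2 := by rw [hdot]; ring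
  have key : ∑ e, (z e ^ 2 + b e ^ 2) ≤ ∑ e, (|z e| + |b e|) := by
    rw [hsum1, Finset.sum_congr rfl (fun e _ => huabs e)]
    exact Finset.sum_le_sum (fun e _ => abs_add_le _ _)
  have key2 : ∑ e, (|z e| + |b e|) ≤ ∑ e, (z e ^ 2 + b e ^ 2) :=
    Finset.sum_le_sum (fun e _ => add_le_add (habsz e) (habsb e))
  have heq : ∑ e, (|z e| + |b e|) = ∑ e, (z e ^ 2 + b e ^ 2) := le_antisymm key2 key
  have hptws : ∀ e ∈ Finset.univ (α := G.E), |z e| + |b e| = z e ^ 2 + b e ^ 2 :=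
    ((Finset.sum_eq_sum_iff_of_le
      (fun e _ => add_le_add (habsz e) (habsb e))).mp heq)
  have heq2 : ∑ e, (z e + b e) ^ 2 = ∑ e, (|z e| + |b e|) := by
    rw [← hsum1, heq]
  have hptws2 : ∀ e ∈ Finset.univ (α := G.E), (z e + b e) ^ 2 = |z e| + |b e| := by
    have h1 : ∀ e ∈ Finset.univ (α := G.E), (z e + b e) ^ 2 ≤ |z e| + |b e| := by
      intro e _; rw [huabs e]; exact abs_add_le _ _
    exact fun e he => (Finset.sum_eq_sum_iff_of_le h1).mp heq2 e he
  intro e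
  have h1 : |z e| + |b e| = z e ^ 2 + b e ^ 2 := hptws e (Finset.mem_univ e)
  have hz1 : |z e| = z e ^ 2 := le_antisymm (habsz e) (by nlinarith [habsz e, habsb e])
  have hb1 : |b e| = b e ^ 2 := le_antisymm (habsb e) (by nlinarith [habsz e, habsb e])
  have hzpm : z e = 0 ∨ |z e| = 1 := by
    rcases eq_or_ne (z e) 0 with h | h
    · exact Or.inl h
    · right
      have hne : |z e| ≠ 0 := fun hc => h (abs_eq_zero.mp hc)
      have h5 : |z e| ^ 2 = |z e| := by rw [sq_abs]; exact hz1.symm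
      have h4 : |z e| * (|z e| - 1) = 0 := by rw [mul_sub, mul_one, ← sq, h5]; ring
      rcases mul_eq_zero.mp h4 with h6 | h6
      · exact absurd h6 hne
      · linarith
  have hbpm : b e = 0 ∨ |b e| = 1 := by
    rcases eq_or_ne (b e) 0 with h | h
    · exact Or.inl h
    · right
      have hne : |b e| ≠ 0 := fun hc => h (abs_eq_zero.mp hc)
      have h5 : |b e| ^ 2 = |b e| := by rw [sq_abs]; exact hb1.symm
      have h4 : |b e| * (|b e| - 1) = 0 := by rw [mul_sub, mul_one, ← sq, h5]; ring
      rcases mul_eq_zero.mp h4 with h6 | h6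
      · exact absurd h6 hne
      · linarith
  have hnotboth : ¬(z e ≠ 0 ∧ b e ≠ 0) := by
    rintro ⟨hz0, hb0⟩
    have hz2 : |z e| = 1 := hzpm.resolve_left hz0
    have hb2 : |b e| = 1 := hbpm.resolve_left hb0
    have h2 : (z e + b e) ^ 2 = 2 := by
      rw [hptws2 e (Finset.mem_univ e), hz2, hb2]; norm_num
    rcases hu e with h | h | h <;> rw [← hue e, h] at h2 <;> norm_num at h2
  rcases eq_or_ne (z e) 0 with h | h
  · right; exact ⟨h, by rw [hue e, h]; ring⟩
  · left
    have hb0 : b e = 0 := by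
      by_contra hb0; exact hnotboth ⟨h, hb0⟩
    exact ⟨by rw [hue e, hb0]; ring, hb0⟩

section Walk

open Classical in
/-- sign of w at e -/
noncomputable def wsgn (w : G.E → ℝ) (e : G.E) : ℝ := if 0 < w e then 1 else -1

open Classical in
/-- head of e in the w-reorientation -/
noncomputable def wh (w : G.E → ℝ) (e : G.E) : G.V :=
  if 0 < w e then G.head e else G.tail e

open Classical in
/-- tail of e in the w-reorientation -/
noncomputable def wt (w : G.E → ℝ) (e : G.E) : G.V :=
  if 0 < w e then G.tail e else G.head e

open Classical

lemma wsgn_ne_zero (w : G.E → ℝ) (e : G.E) : wsgn w e ≠ 0 := by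
  unfold wsgn; split <;> norm_num

lemma wsgn_mul_pos {w : G.E → ℝ} {e : G.E} (h : w e ≠ 0) : 0 < wsgn w e * w e := by
  unfold wsgn
  rcases lt_or_gt_of_ne h with h' | h'
  · rw [if_neg (by linarith)]; nlinarith
  · rw [if_pos h']; nlinarith

lemma wsgn_mul_eq_abs {w : G.E → ℝ} (e : G.E) : wsgn w e * w e = |w e| := by
  unfold wsgn
  rcases lt_trichotomy (w e) 0 with h' | h' | h'
  · rw [if_neg (by linarith), abs_of_neg h']; ring
  · simp [h']
  · rw [if_pos h', abs_of_pos h']; ring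

lemma wh_wt_eq_iff {w : G.E → ℝ} (e : G.E) :
    (wh w e = wt w e) ↔ G.head e = G.tail e := by
  unfold wh wt; split
  · exact Iff.rfl
  · exact eq_comm

lemma incMat_wsgn (w : G.E → ℝ) (v : G.V) (e : G.E) :
    incMat G v e * wsgn w e =
      (if wh w e = v then 1 else 0) - (if wt w e = v then 1 else 0) := by
  unfold incMat wsgn wh wt
  by_cases h : 0 < w e
  · simp only [if_pos h]; ring
  · simp only [if_neg h]
    by_cases h1 : G.head e = v <;> by_cases h2 : G.tail e = v <;>
      simp only [if_pos, if_neg, h1, h2, if_true, if_false] <;> ring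

lemma incMat_mul_w (w : G.E → ℝ) (v : G.V) (e : G.E) :
    incMat G v e * w e =
      |w e| * ((if wh w e = v then 1 else 0) - (if wt w e = v then 1 else 0)) := by
  rcases eq_or_ne (w e) 0 with h | h
  · simp [h]
  · have h1 := incMat_wsgn w v e
    have h2 : wsgn w e * wsgn w e = 1 := by unfold wsgn; split <;> norm_num
    calc incMat G v e * w e = (incMat G v e * wsgn w e) * (wsgn w e * w e) := by
          rw [show incMat G v e * wsgn w e * (wsgn w e * w e)
              = incMat G v e * (wsgn w e * wsgn w e) * w e by ring, h2]; ring
      _ = _ := by rw [h1, wsgn_mul_eq_abs]; ring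

lemma walk_conservation {w : G.E → ℝ} (hw : w ∈ cycleSpace G) (v : G.V) :
    ∑ e, |w e| * ((if wh w e = v then 1 else 0) - (if wt w e = v then 1 else 0)) = 0 := by
  rw [← Finset.sum_congr rfl (fun e _ => incMat_mul_w w v e)]
  exact mem_cycleSpace_iff.mp hw v

lemma walk_step {w : G.E → ℝ} (hw : w ∈ cycleSpace G) {e : G.E} (he : w e ≠ 0) :
    ∃ e', w e' ≠ 0 ∧ wt w e' = wh w e := by
  by_contra hc
  push_neg at hc
  have hcons := walk_conservation hw (wh w e)
  rw [Finset.sum_congr rfl (fun e' (_ : e' ∈ Finset.univ) => mul_sub (|w e'|)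
    (if wh w e' = wh w e then (1:ℝ) else 0) (if wt w e' = wh w e then (1:ℝ) else 0)),
    Finset.sum_sub_distrib] at hcons
  have hz : ∀ e' ∈ Finset.univ (α := G.E),
      |w e'| * (if wt w e' = wh w e then (1:ℝ) else 0) = 0 := by
    intro e' _
    rcases eq_or_ne (w e') 0 with h | h
    · simp [h]
    · rw [if_neg (hc e' h), mul_zero]
  rw [Finset.sum_eq_zero hz, sub_zero] at hcons
  have hpos : 0 < ∑ e', |w e'| * (if wh w e' = wh w e then (1:ℝ) else 0) := by
    refine Finset.sum_pos' (fun e' _ => ?_) ⟨e, Finset.mem_univ e, ?_⟩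
    · positivity
    · rw [if_pos rfl, mul_one]; exact abs_pos.mpr he
  linarith

lemma incMat_ne_zero_cases {w : G.E → ℝ} {u : G.V} {e : G.E} (h : incMat G u e ≠ 0) :
    wh w e = u ∨ wt w e = u := by
  have hht : G.head e = u ∨ G.tail e = u := by
    by_contra hc
    push_neg at hc
    exact h (by simp [incMat, hc.1, hc.2])
  unfold wh wt
  split
  · exact hht
  · exact hht.symm

lemma incMat_coeff_head {w : G.E → ℝ} {u : G.V} {e : G.E}
    (h1 : wh w e = u) (h2 : wt w e ≠ u) : incMat G u e = wsgn w e := by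
  unfold wh at h1
  unfold wt at h2
  unfold incMat wsgn
  by_cases h : 0 < w e
  · rw [if_pos h] at h1 h2 ⊢; rw [if_pos h1, if_neg h2]; ring
  · rw [if_neg h] at h1 h2 ⊢; rw [if_pos h1, if_neg h2]; ring

lemma incMat_coeff_tail {w : G.E → ℝ} {u : G.V} {e : G.E}
    (h1 : wt w e = u) (h2 : wh w e ≠ u) : incMat G u e = -wsgn w e := by
  unfold wt at h1
  unfold wh at h2
  unfold incMat wsgn
  by_cases h : 0 < w e
  · rw [if_pos h] at h1 h2 ⊢; rw [if_pos h1, if_neg h2]; ring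
  · rw [if_neg h] at h1 h2 ⊢; rw [if_pos h1, if_neg h2]; ring

/-- Every nonzero circulation contains a conformal directed cycle. -/
lemma exists_conformal_circuit {w : G.E → ℝ} (hw : w ∈ cycleSpace G) (hw0 : w ≠ 0) :
    ∃ y, IsDirCycle G y ∧ support y ⊆ support w ∧ ∀ e ∈ support y, 0 < y e * w e := by
  obtain ⟨e0, he0⟩ : ∃ e, w e ≠ 0 := by
    by_contra h; push_neg at h; exact hw0 (funext h)
  by_cases hloop : ∃ e, w e ≠ 0 ∧ G.head e = G.tail e
  · -- loop case
    obtain ⟨e, he, heq⟩ := hloop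
    refine ⟨fun e' => if e' = e then wsgn w e else 0, ⟨?_, ?_, ?_, ?_⟩, ?_, ?_⟩
    · refine mem_cycleSpace_iff.mpr fun v => ?_
      rw [Finset.sum_eq_single e (fun e' _ h => by rw [if_neg h, mul_zero])
        (fun h => absurd (Finset.mem_univ e) h)]
      rw [if_pos rfl]
      have : incMat G v e = 0 := by simp [incMat, heq]
      rw [this, zero_mul]
    · intro h
      have := congrFun h e
      beta_reduce at this
      rw [if_pos rfl] at this
      exact wsgn_ne_zero w e this
    · intro e'
      beta_reduce
      by_cases h : e' = e
      · rw [if_pos h]; unfold wsgn; split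
        · exact Or.inr (Or.inl rfl)
        · exact Or.inr (Or.inr rfl)
      · rw [if_neg h]; exact Or.inl rfl
    · intro y' _ hy'0 hsub
      have hsupp : support (fun e' => if e' = e then wsgn w e else 0) = {e} := by
        ext e'
        by_cases h : e' = e <;> simp [Function.mem_support, h, wsgn_ne_zero]
      rw [hsupp] at hsub ⊢
      rcases Set.subset_singleton_iff_eq.mp hsub with h | h
      · exact absurd (Function.support_eq_empty_iff.mp h) hy'0
      · exact h
    · intro e' he'
      have : e' = e := by
        by_contra h
        exact he' (if_neg h)
      subst this
      intro hc
      exact he (by simpa using hc)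
    · intro e' he'
      have he'e : e' = e := by
        by_contra h
        exact he' (if_neg h)
      subst he'e
      beta_reduce
      rw [if_pos rfl]
      exact wsgn_mul_pos he
  · -- no loops among support edges
    push_neg at hloop
    set next : G.E → G.E := fun e =>
      if h : ∃ e', w e' ≠ 0 ∧ wt w e' = wh w e then h.choose else e0 with hnext
    set f : ℕ → G.E := fun n => next^[n] e0 with hf
    have hstep : ∀ e, w e ≠ 0 → w (next e) ≠ 0 ∧ wt w (next e) = wh w e := by
      intro e he
      have h := walk_step hw he
      rw [hnext]
      simp only [dif_pos h]
      exact h.choose_spec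
    have hfS : ∀ n, w (f n) ≠ 0 := by
      intro n
      induction n with
      | zero => exact he0
      | succ n ih =>
        have : f (n + 1) = next (f n) := Function.iterate_succ_apply' next n e0
        rw [this]
        exact (hstep _ ih).1
    have hlink : ∀ n, wt w (f (n + 1)) = wh w (f n) := by
      intro n
      have : f (n + 1) = next (f n) := Function.iterate_succ_apply' next n e0
      rw [this]
      exact (hstep _ (hfS n)).2
    set vx : ℕ → G.V := fun n => wh w (f n) with hvx
    haveI : Finite G.V := Finite.of_fintype G.V
    obtain ⟨i, j, hij, hv⟩ := Finite.exists_ne_map_eq_of_infinite vx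
    have hex : ∃ d, 0 < d ∧ ∃ a, vx a = vx (a + d) := by
      rcases hij.lt_or_gt with h | h
      · exact ⟨j - i, by omega, i, by rw [show i + (j - i) = j by omega]; exact hv⟩
      · exact ⟨i - j, by omega, j, by rw [show j + (i - j) = i by omega]; exact hv.symm⟩
    haveI := Classical.decPred (fun d => 0 < d ∧ ∃ a, vx a = vx (a + d))
    have hspec := Nat.find_spec hex
    have hminspec := fun m (hm : m < Nat.find hex) => Nat.find_min hex hm
    set d0 := Nat.find hex with hd0def
    obtain ⟨hd0pos, a, ha⟩ := hspec
    have hmin : ∀ d, 0 < d → d < d0 → ∀ a', vx a' ≠ vx (a' + d) := by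
      intro d h1 h2 a' hv'
      exact hminspec d h2 ⟨h1, a', hv'⟩
    have hd02 : 2 ≤ d0 := by
      by_contra hc
      have hd01 : d0 = 1 := by omega
      rw [hd01] at ha
      have h1 : wt w (f (a + 1)) = wh w (f (a + 1)) := by
        rw [hlink a]; exact ha
      have := (wh_wt_eq_iff (w := w) (f (a + 1))).mp h1.symm
      exact hloop (f (a + 1)) (hfS (a + 1)) this
    have hconsec : ∀ m, vx m ≠ vx (m + 1) := fun m => hmin 1 one_pos (by omega) m
    have vinj' : ∀ p q, a ≤ p → a ≤ q → p ≤ a + d0 → q ≤ a + d0 → vx p = vx q →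
        p = q ∨ (p = a ∧ q = a + d0) ∨ (q = a ∧ p = a + d0) := by
      have key : ∀ p q, a ≤ p → p < q → q ≤ a + d0 → vx p = vx q →
          p = a ∧ q = a + d0 := by
        intro p q h1 h2 h3 h4
        have hle : q - p ≤ d0 := by omega
        rcases lt_or_eq_of_le hle with h | h
        · exfalso
          exact hmin (q - p) (by omega) h p (by rw [show p + (q - p) = q by omega]; exact h4)
        · omega
      intro p q h1 h2 h3 h4 h5
      rcases lt_trichotomy p q with h | h | h
      · exact Or.inr (Or.inl (key p q h1 h h4 h5))
      · exact Or.inl h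
      · exact Or.inr (Or.inr (key q p h2 h h3 h5.symm))
    set g : ℕ → G.E := fun j => f (a + j + 1) with hg
    have hgS : ∀ j, w (g j) ≠ 0 := fun j => hfS (a + j + 1)
    have hgh : ∀ j, wh w (g j) = vx (a + j + 1) := fun j => rfl
    have hgt : ∀ j, wt w (g j) = vx (a + j) := fun j => hlink (a + j)
    have ginj : ∀ l m, l < d0 → m < d0 → g l = g m → l = m := by
      intro l m hl hm hglm
      have h1 : vx (a + l + 1) = vx (a + m + 1) := by
        rw [← hgh l, ← hgh m, hglm]
      rcases vinj' (a + l + 1) (a + m + 1) (by omega) (by omega) (by omega) (by omega) h1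
        with h | h | h
      · omega
      · omega
      · omega
    set T : Finset G.E := (Finset.range d0).image g with hT
    have hmemT : ∀ e, e ∈ T ↔ ∃ j < d0, g j = e := by
      intro e
      simp [hT, Finset.mem_image, Finset.mem_range]
    have hTS : ∀ e ∈ T, w e ≠ 0 := by
      intro e he
      obtain ⟨j, _, rfl⟩ := (hmemT e).mp he
      exact hgS j
    set y : G.E → ℝ := fun e => if e ∈ T then wsgn w e else 0 with hy
    have hysupp : support y = ↑T := by
      ext e
      by_cases h : e ∈ T <;> simp [Function.mem_support, hy, h, wsgn_ne_zero]
    have hyM : y ∈ cycleSpace G := by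
      refine mem_cycleSpace_iff.mpr fun v0 => ?_
      have h1 : ∀ e ∈ Finset.univ (α := G.E),
          incMat G v0 e * y e = if e ∈ T then incMat G v0 e * wsgn w e else 0 := by
        intro e _
        by_cases h : e ∈ T <;> simp [hy, h]
      rw [Finset.sum_congr rfl h1, Finset.sum_ite_mem, Finset.univ_inter,
        Finset.sum_image (fun l hl m hm => ginj l m (Finset.mem_range.mp hl)
          (Finset.mem_range.mp hm))]
      have h2 : ∀ j ∈ Finset.range d0,
          incMat G v0 (g j) * wsgn w (g j)
          = (if vx (a + (j+1)) = v0 then (1:ℝ) else 0)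
            - (if vx (a + j) = v0 then (1:ℝ) else 0) := by
        intro j _
        rw [incMat_wsgn, hgh j, hgt j, show a + j + 1 = a + (j + 1) by omega]
      rw [Finset.sum_congr rfl h2, Finset.sum_range_sub
        (f := fun m => if vx (a + m) = v0 then (1:ℝ) else 0)]
      rw [show a + 0 = a by omega, ← ha]
      ring
    have hyzpm : IsZPM G y := by
      intro e
      by_cases h : e ∈ T
      · simp only [hy, if_pos h]; unfold wsgn; split
        · exact Or.inr (Or.inl rfl)
        · exact Or.inr (Or.inr rfl)
      · exact Or.inl (by simp [hy, h])
    have hy0 : y ≠ 0 := by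
      intro h
      have hg0T : g 0 ∈ T := (hmemT _).mpr ⟨0, by omega, rfl⟩
      have := congrFun h (g 0)
      rw [hy] at this
      simp only [if_pos hg0T] at this
      exact wsgn_ne_zero w (g 0) this
    -- minimality
    have hymin : ∀ y' ∈ cycleSpace G, y' ≠ 0 → support y' ⊆ support y →
        support y' = support y := by
      intro y' hy'M hy'0 hy'sub
      rw [hysupp] at hy'sub ⊢
      have hy'z : ∀ e, e ∉ T → y' e = 0 := by
        intro e he
        by_contra h
        exact he (hy'sub h)
      have hlinky : ∀ j, j + 2 ≤ d0 →
          wsgn w (g j) * y' (g j) = wsgn w (g (j+1)) * y' (g (j+1)) := by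
        intro j hj
        set u := vx (a + j + 1) with hu
        have hcons0 : ∑ e, incMat G u e * y' e = 0 := mem_cycleSpace_iff.mp hy'M u
        rw [← Finset.sum_subset (Finset.subset_univ T)
          (fun e _ he => by rw [hy'z e he, mul_zero])] at hcons0
        rw [hT, Finset.sum_image (fun l hl m hm => ginj l m (Finset.mem_range.mp hl)
          (Finset.mem_range.mp hm))] at hcons0
        have hpair : ({j, j+1} : Finset ℕ) ⊆ Finset.range d0 := by
          intro x hx
          simp only [Finset.mem_insert, Finset.mem_singleton] at hx
          rcases hx with rfl | rfl <;> (simp only [Finset.mem_range]; omega)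
        have hvanish : ∀ j' ∈ Finset.range d0, j' ∉ ({j, j+1} : Finset ℕ) →
            incMat G u (g j') * y' (g j') = 0 := by
          intro j' hj' hj'ne
          simp only [Finset.mem_insert, Finset.mem_singleton, not_or] at hj'ne
          have hj'lt := Finset.mem_range.mp hj'
          have hz : incMat G u (g j') = 0 := by
            by_contra hc
            rcases incMat_ne_zero_cases (w := w) hc with h | h
            · rw [hgh j'] at h
              rcases vinj' (a + j' + 1) (a + j + 1) (by omega) (by omega) (by omega)
                (by omega) (by rw [h]) with h' | h' | h'
              · exact hj'ne.1 (by omega)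
              · omega
              · omega
            · rw [hgt j'] at h
              rcases vinj' (a + j') (a + j + 1) (by omega) (by omega) (by omega)
                (by omega) (by rw [h]) with h' | h' | h'
              · exact hj'ne.2 (by omega)
              · exact absurd (h'.2) (by omega)
              · omega
          rw [hz, zero_mul]
        rw [← Finset.sum_subset hpair hvanish, Finset.sum_pair (by omega : j ≠ j + 1)]
          at hcons0
        have hc1 : incMat G u (g j) = wsgn w (g j) := by
          refine incMat_coeff_head (by rw [hgh j]) ?_
          rw [hgt j, hu]
          exact hconsec (a + j)
        have hc2 : incMat G u (g (j+1)) = -wsgn w (g (j+1)) := by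
          refine incMat_coeff_tail (by rw [hgt (j+1)]; rw [hu]; rfl) ?_
          rw [hgh (j+1), hu]
          intro hcontra
          exact hconsec (a + j + 1) (by rw [show a+j+1+1 = a+(j+1)+1 by omega]; exact hcontra.symm)
        rw [hc1, hc2] at hcons0
        linarith
      have hprop : ∀ j, j < d0 → (y' (g j) = 0 ↔ y' (g 0) = 0) := by
        intro j
        induction j with
        | zero => intro _; exact Iff.rfl
        | succ j ih =>
          intro hj
          have hlj := hlinky j (by omega)
          have hiff : y' (g (j+1)) = 0 ↔ y' (g j) = 0 := by
            constructor
            · intro h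
              rw [h, mul_zero] at hlj
              rcases mul_eq_zero.mp hlj with h' | h'
              · exact absurd h' (wsgn_ne_zero w (g j))
              · exact h'
            · intro h
              rw [h, mul_zero] at hlj
              rcases mul_eq_zero.mp hlj.symm with h' | h'
              · exact absurd h' (wsgn_ne_zero w (g (j+1)))
              · exact h'
          exact hiff.trans (ih (by omega))
      obtain ⟨e1, he1⟩ : ∃ e, y' e ≠ 0 := by
        by_contra h; push_neg at h; exact hy'0 (funext h)
      have he1T : e1 ∈ T := hy'sub he1
      obtain ⟨j1, hj1, hj1e⟩ := (hmemT e1).mp he1T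
      have hnz0 : y' (g 0) ≠ 0 := by
        intro h
        have h2 := (hprop j1 hj1).mpr h
        rw [hj1e] at h2
        exact he1 h2
      refine Set.Subset.antisymm hy'sub ?_
      intro e he
      obtain ⟨j2, hj2, rfl⟩ := (hmemT e).mp he
      have : y' (g j2) ≠ 0 := fun h => hnz0 ((hprop j2 hj2).mp h)
      exact this
    refine ⟨y, ⟨hyM, hy0, hyzpm, hymin⟩, ?_, ?_⟩
    · rw [hysupp]
      intro e he
      exact hTS e he
    · intro e he
      rw [hysupp] at he
      have heT : e ∈ T := Finset.mem_coe.mp he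
      have : y e = wsgn w e := by rw [hy]; beta_reduce; rw [if_pos heT]
      rw [this]
      exact wsgn_mul_pos (hTS e heT)

end Walk

open Classical

lemma transpose_mulVec_apply (f : G.V → ℝ) (e : G.E) :
    ((incMat G).transpose.mulVec f) e = f (G.head e) - f (G.tail e) := by
  unfold Matrix.mulVec dotProduct incMat Matrix.transpose
  simp only [Matrix.of_apply]
  rw [Finset.sum_congr rfl (fun v _ => by
    rw [sub_mul, ite_mul, one_mul, zero_mul, ite_mul, one_mul, zero_mul] :
    ∀ v ∈ Finset.univ, ((if G.head e = v then (1:ℝ) else 0) - if G.tail e = v then 1 else 0) * f v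
      = (if G.head e = v then f v else 0) - (if G.tail e = v then f v else 0))]
  rw [Finset.sum_sub_distrib]
  congr 1 <;> simp

/-- threshold cut: from any nonzero cocycle vector extract a nonzero {0,±1}
sign-consistent cocycle vector with smaller support. -/
lemma threshold_cut {w : G.E → ℝ} (hw : w ∈ cocycleSpace G) (hw0 : w ≠ 0) :
    ∃ y, y ∈ cocycleSpace G ∧ y ≠ 0 ∧ IsZPM G y ∧ support y ⊆ support w ∧
      ∀ e, 0 ≤ y e * w e := by
  obtain ⟨f, rfl⟩ := mem_cocycleSpace_iff.mp hw
  obtain ⟨e0, he0⟩ : ∃ e, ((incMat G).transpose.mulVec f) e ≠ 0 := by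
    by_contra h; push_neg at h; exact hw0 (funext h)
  rw [transpose_mulVec_apply] at he0
  set t0 := min (f (G.head e0)) (f (G.tail e0)) with ht0
  set A : G.V → ℝ := fun v => if t0 < f v then 1 else 0 with hA
  set y := (incMat G).transpose.mulVec A with hydef
  have hyapp : ∀ e, y e = A (G.head e) - A (G.tail e) :=
    fun e => transpose_mulVec_apply A e
  have hwapp : ∀ e, ((incMat G).transpose.mulVec f) e = f (G.head e) - f (G.tail e) :=
    fun e => transpose_mulVec_apply f e
  refine ⟨y, ⟨A, rfl⟩, ?_, ?_, ?_, ?_⟩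
  · -- y ≠ 0
    intro h
    have h1 := congrFun h e0
    rw [hyapp e0] at h1
    simp only [Pi.zero_apply] at h1
    have hne : f (G.head e0) ≠ f (G.tail e0) := fun hc => he0 (by rw [hc]; ring)
    rcases lt_or_gt_of_ne hne with hlt | hgt
    · have hA1 : A (G.head e0) = 0 := by
        rw [hA]; beta_reduce; rw [if_neg (by rw [ht0]; simp; exact hlt.le)]
      have hA2 : A (G.tail e0) = 1 := by
        rw [hA]; beta_reduce
        rw [if_pos (by rw [ht0]; rw [min_eq_left hlt.le]; exact hlt)]
      rw [hA1, hA2] at h1; norm_num at h1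
    · have hA1 : A (G.head e0) = 1 := by
        rw [hA]; beta_reduce
        rw [if_pos (by rw [ht0]; rw [min_eq_right hgt.le]; exact hgt)]
      have hA2 : A (G.tail e0) = 0 := by
        rw [hA]; beta_reduce; rw [if_neg (by rw [ht0]; simp; exact hgt.le)]
      rw [hA1, hA2] at h1; norm_num at h1
  · -- ZPM
    intro e
    rw [hyapp e, hA]
    beta_reduce
    by_cases h1 : t0 < f (G.head e) <;> by_cases h2 : t0 < f (G.tail e) <;>
      simp [h1, h2]
  · -- support
    intro e he
    rw [Function.mem_support] at he ⊢
    rw [hyapp e] at he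
    rw [hwapp e]
    intro hc
    have : f (G.head e) = f (G.tail e) := by linarith [sub_eq_zero.mp hc]
    exact he (by rw [hA]; beta_reduce; rw [this]; ring)
  · -- sign consistency
    intro e
    rw [hyapp e, hwapp e, hA]
    beta_reduce
    by_cases h1 : t0 < f (G.head e) <;> by_cases h2 : t0 < f (G.tail e) <;>
      simp only [h1, h2, if_true, if_false] <;> nlinarith [h1, h2]

/-- inside the support of any nonzero element of a submodule there is a
support-minimal nonzero element. -/
lemma exists_minimal_support (M : Submodule ℝ (G.E → ℝ)) :
    ∀ (n : ℕ) (w : G.E → ℝ), (support w).ncard ≤ n → w ∈ M → w ≠ 0 →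
    ∃ m, m ∈ M ∧ m ≠ 0 ∧ support m ⊆ support w ∧
      ∀ y ∈ M, y ≠ 0 → support y ⊆ support m → support y = support m := by
  intro n
  induction n with
  | zero =>
    intro w hc hwM hw0
    exfalso
    have h1 : (support w).ncard = 0 := by omega
    have h2 : support w = ∅ :=
      (Set.ncard_eq_zero (Set.toFinite _)).mp h1
    exact hw0 (Function.support_eq_empty_iff.mp h2)
  | succ n ih =>
    intro w hc hwM hw0
    by_cases h : ∀ y ∈ M, y ≠ 0 → support y ⊆ support w → support y = support w
    · exact ⟨w, hwM, hw0, subset_rfl, h⟩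
    · push_neg at h
      obtain ⟨y, hyM, hy0, hysub, hyne⟩ := h
      have hss : support y ⊂ support w := ssubset_of_subset_of_ne hysub hyne
      have hlt : (support y).ncard < (support w).ncard :=
        Set.ncard_lt_ncard hss (Set.toFinite _)
      obtain ⟨m, h1, h2, h3, h4⟩ := ih y (by omega) hyM hy0
      exact ⟨m, h1, h2, h3.trans hysub, h4⟩

lemma exists_conformal_cocircuit_aux :
    ∀ (n : ℕ) (w : G.E → ℝ), (support w).ncard ≤ n → w ∈ cocycleSpace G → w ≠ 0 →
    ∃ y, IsDirCocycle G y ∧ support y ⊆ support w ∧ ∀ e ∈ support y, 0 < y e * w e := by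
  intro n
  induction n with
  | zero =>
    intro w hc hwM hw0
    exfalso
    have h2 : support w = ∅ :=
      (Set.ncard_eq_zero (Set.toFinite _)).mp (by omega)
    exact hw0 (Function.support_eq_empty_iff.mp h2)
  | succ n ih =>
    intro w hc hwM hw0
    obtain ⟨m, hmM, hm0, hmsub, hmmin⟩ :=
      exists_minimal_support (cocycleSpace G) ((support w).ncard) w le_rfl hwM hw0
    obtain ⟨y0, hy0M, hy00, hy0zpm, hy0sub, _⟩ := threshold_cut hmM hm0
    have hy0supp : support y0 = support m := hmmin y0 hy0M hy00 hy0sub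
    have hy0min : ∀ y' ∈ cocycleSpace G, y' ≠ 0 → support y' ⊆ support y0 →
        support y' = support y0 := by
      intro y' h1 h2 h3
      rw [hy0supp] at h3 ⊢
      exact hmmin y' h1 h2 h3
    have hy0dir : IsDirCocycle G y0 := ⟨hy0M, hy00, hy0zpm, hy0min⟩
    have hy0w : support y0 ⊆ support w := hy0supp ▸ hmsub
    by_cases hagree : ∃ e ∈ support y0, 0 < y0 e * w e
    · obtain ⟨estar, hestar, hestarpos⟩ := hagree
      -- minimize over agreeing edges
      set P : Finset G.E := Finset.univ.filter (fun e => 0 < y0 e * w e) with hP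
      have hPne : P.Nonempty := ⟨estar, by rw [hP]; simp [hestarpos]⟩
      obtain ⟨em, hemP, hemmin⟩ := Finset.exists_min_image P (fun e => y0 e * w e) hPne
      have hempos : 0 < y0 em * w em := by
        have := Finset.mem_filter.mp (hP ▸ hemP)
        exact this.2
      set t0 := y0 em * w em with ht0
      set w' := w - t0 • y0 with hw'
      have hw'app : ∀ e, w' e = w e - t0 * y0 e := fun e => rfl
      have hsq : ∀ e ∈ support y0, y0 e * y0 e = 1 := by
        intro e he
        rcases hy0zpm e with h | h | h
        · exact absurd h he
        · rw [h]; ring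
        · rw [h]; ring
      have hkey : ∀ e, 0 ≤ w' e * w e := by
        intro e
        rcases eq_or_ne (y0 e) 0 with h | h
        · rw [hw'app e, h, mul_zero, sub_zero]; exact mul_self_nonneg _
        · have hsq' := hsq e h
          by_cases hP' : 0 < y0 e * w e
          · have hge : t0 ≤ y0 e * w e := hemmin e (by rw [hP]; simp [hP'])
            have h7 : 0 ≤ (y0 e * w e) * (y0 e * w e) - t0 * (y0 e * w e) := by
              nlinarith [hge, hempos]
            have h8 : (w e - t0 * y0 e) * w e
                = (y0 e * w e) * (y0 e * w e) - t0 * (y0 e * w e) := by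
              linear_combination (-(w e * w e)) * hsq'
            rw [hw'app e, h8]
            exact h7
          · have hle : y0 e * w e ≤ 0 := not_lt.mp hP'
            rw [hw'app e]
            nlinarith [mul_self_nonneg (w e), hempos, hle]
      have hem_supp : em ∈ support y0 := by
        rw [Function.mem_support]
        intro h0
        rw [ht0, h0, zero_mul] at hempos
        exact lt_irrefl 0 hempos
      have hem0 : w' em = 0 := by
        rw [hw'app em, ht0]
        linear_combination (-(w em)) * (hsq em hem_supp)
      have hw'sub : support w' ⊆ support w := by
        intro e he
        rw [Function.mem_support] at he ⊢
        intro hc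
        have hy0e : y0 e = 0 := by
          by_contra h
          exact (hy0w h : w e ≠ 0) hc
        exact he (by rw [hw'app e, hc, hy0e]; ring)
      have hw'M : w' ∈ cocycleSpace G :=
        Submodule.sub_mem _ hwM (Submodule.smul_mem _ _ hy0M)
      rcases eq_or_ne w' 0 with hw'0 | hw'0
      · refine ⟨y0, hy0dir, hy0w, ?_⟩
        intro e he
        have h1 := congrFun hw'0 e
        rw [hw'app e] at h1
        simp only [Pi.zero_apply] at h1
        have hwe : w e = t0 * y0 e := by linarith
        rw [hwe]
        nlinarith [hsq e he, hempos]
      · have hss : support w' ⊂ support w := by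
          refine ssubset_of_subset_of_ne hw'sub (fun hc => ?_)
          have hem_in : em ∈ support w := by
            rw [Function.mem_support]
            intro h0
            rw [ht0, h0, mul_zero] at hempos
            exact lt_irrefl 0 hempos
          rw [← hc] at hem_in
          exact hem_in hem0
        have hlt := Set.ncard_lt_ncard hss (Set.toFinite _)
        obtain ⟨y, hydir, hysub, hyconf⟩ := ih w' (by omega) hw'M hw'0
        refine ⟨y, hydir, hysub.trans hw'sub, ?_⟩
        intro e he
        have h1 : 0 < y e * w' e := hyconf e he
        have h2 : w' e ≠ 0 := fun h0 => by rw [h0, mul_zero] at h1; exact lt_irrefl 0 h1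
        have h3 : 0 ≤ w' e * w e := hkey e
        have h4 : w e ≠ 0 := hw'sub (hysub he)
        have h5 : 0 < w' e * w e := lt_of_le_of_ne h3 (Ne.symm (mul_ne_zero h2 h4))
        have h6 := mul_pos h1 h5
        nlinarith [h6, sq_nonneg (w' e)]
    · push_neg at hagree
      refine ⟨-y0, ⟨Submodule.neg_mem _ hy0M, neg_ne_zero.mpr hy00, ?_, ?_⟩, ?_, ?_⟩
      · intro e
        rcases hy0zpm e with h | h | h
        · exact Or.inl (by simp [h])
        · exact Or.inr (Or.inr (by simp [h]))
        · exact Or.inr (Or.inl (by simp [h]))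
      · intro y' h1 h2 h3
        have hsn : support (-y0) = support y0 := by
          ext e; simp [Function.mem_support]
        rw [hsn] at h3 ⊢
        exact hy0min y' h1 h2 h3
      · have hsn : support (-y0) = support y0 := by
          ext e; simp [Function.mem_support]
        rw [hsn]
        exact hy0w
      · intro e he
        have hsn : support (-y0) = support y0 := by
          ext e; simp [Function.mem_support]
        rw [hsn] at he
        have h1 : y0 e * w e ≤ 0 := hagree e he
        have h2 : y0 e ≠ 0 := he
        have h3 : w e ≠ 0 := hy0w he
        have h4 : y0 e * w e ≠ 0 := mul_ne_zero h2 h3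
        have : y0 e * w e < 0 := lt_of_le_of_ne h1 h4
        simp only [Pi.neg_apply]
        nlinarith

lemma zpm_conf_eq {a b : ℝ} (ha : a = 0 ∨ a = 1 ∨ a = -1) (hb : b = 0 ∨ b = 1 ∨ b = -1)
    (h : 0 < a * b) : a = b := by
  rcases ha with rfl | rfl | rfl <;> rcases hb with rfl | rfl | rfl <;> norm_num at h <;> norm_num

/-- Generic conformal decomposition of a {0,±1} vector of a submodule into pairwise
disjoint "circuits". -/
lemma decomp_aux (M : Submodule ℝ (G.E → ℝ)) (Dir : (G.E → ℝ) → Prop)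
    (hDirM : ∀ y, Dir y → y ∈ M) (hDir0 : ∀ y, Dir y → y ≠ 0)
    (hDirZ : ∀ y, Dir y → IsZPM G y)
    (hext : ∀ z, z ∈ M → z ≠ 0 → ∃ y, Dir y ∧ support y ⊆ support z ∧
      ∀ e ∈ support y, 0 < y e * z e) :
    ∀ (n : ℕ) (z : G.E → ℝ), (support z).ncard ≤ n → z ∈ M → IsZPM G z →
    ∃ (k : ℕ) (c : Fin k → (G.E → ℝ)), (∀ i, Dir (c i)) ∧
      (∀ i j, i ≠ j → Disjoint (support (c i)) (support (c j))) ∧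
      (∀ i, support (c i) ⊆ support z) ∧
      (∀ i e, e ∈ support (c i) → c i e = z e) ∧ z = ∑ i, c i := by
  intro n
  induction n with
  | zero =>
    intro z hc hzM hzzpm
    have h2 : support z = ∅ :=
      (Set.ncard_eq_zero (Set.toFinite _)).mp (by omega)
    have hz0 : z = 0 := Function.support_eq_empty_iff.mp h2
    exact ⟨0, Fin.elim0, fun i => i.elim0, fun i => i.elim0, fun i => i.elim0,
      fun i => i.elim0, by simp [hz0]⟩
  | succ n ih =>
    intro z hc hzM hzzpm
    rcases eq_or_ne z 0 with hz0 | hz0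
    · exact ⟨0, Fin.elim0, fun i => i.elim0, fun i => i.elim0, fun i => i.elim0,
        fun i => i.elim0, by simp [hz0]⟩
    · obtain ⟨y, hyDir, hysub, hyconf'⟩ := hext z hzM hz0
      have hyzpm := hDirZ y hyDir
      have hyconf : ∀ e ∈ support y, y e = z e :=
        fun e he => zpm_conf_eq (hyzpm e) (hzzpm e) (hyconf' e he)
      set z' := z - y with hz'
      have hz'app : ∀ e, z' e = z e - y e := fun e => rfl
      have hz'supp : support z' = support z \ support y := by
        ext e
        by_cases h : e ∈ support y
        · have : z' e = 0 := by rw [hz'app e, hyconf e h]; ring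
          simp [Function.mem_support, this, h]
        · have hy0 : y e = 0 := by
            by_contra hcon; exact h hcon
          have : z' e = z e := by rw [hz'app e, hy0]; ring
          simp [Function.mem_support, this, h]
      have hz'M : z' ∈ M := Submodule.sub_mem _ hzM (hDirM y hyDir)
      have hz'zpm : IsZPM G z' := by
        intro e
        by_cases h : e ∈ support y
        · exact Or.inl (by rw [hz'app e, hyconf e h]; ring)
        · have hy0 : y e = 0 := by by_contra hcon; exact h hcon
          have : z' e = z e := by rw [hz'app e, hy0]; ring
          rw [this]; exact hzzpm e
      have hss : support z' ⊂ support z := by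
        rw [hz'supp]
        refine Set.ssubset_iff_of_subset Set.diff_subset |>.mpr ?_
        obtain ⟨e, he⟩ : ∃ e, y e ≠ 0 := by
          by_contra hcon; push_neg at hcon; exact hDir0 y hyDir (funext hcon)
        exact ⟨e, hysub he, fun hin => hin.2 he⟩
      have hlt := Set.ncard_lt_ncard hss (Set.toFinite _)
      obtain ⟨k, c, hcdir, hcdisj, hcsub, hcconf, hcsum⟩ := ih z' (by omega) hz'M hz'zpm
      refine ⟨k + 1, Fin.cons y c, ?_, ?_, ?_, ?_, ?_⟩
      · intro i
        rcases Fin.eq_zero_or_eq_succ i with rfl | ⟨j, rfl⟩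
        · rw [Fin.cons_zero]; exact hyDir
        · rw [Fin.cons_succ]; exact hcdir j
      · intro i j hij
        have hdyc : ∀ j', Disjoint (support y) (support (c j')) := by
          intro j'
          rw [Set.disjoint_left]
          intro e he hein
          have := hcsub j' hein
          rw [hz'supp] at this
          exact this.2 he
        rcases Fin.eq_zero_or_eq_succ i with rfl | ⟨i', rfl⟩ <;>
          rcases Fin.eq_zero_or_eq_succ j with rfl | ⟨j', rfl⟩
        · exact absurd rfl hij
        · rw [Fin.cons_zero, Fin.cons_succ]; exact hdyc j'
        · rw [Fin.cons_zero, Fin.cons_succ]; exact (hdyc i').symm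
        · rw [Fin.cons_succ, Fin.cons_succ]
          exact hcdisj i' j' (fun h => hij (by rw [h]))
      · intro i
        rcases Fin.eq_zero_or_eq_succ i with rfl | ⟨j, rfl⟩
        · rw [Fin.cons_zero]; exact hysub
        · rw [Fin.cons_succ]
          exact (hcsub j).trans (by rw [hz'supp]; exact Set.diff_subset)
      · intro i e he
        rcases Fin.eq_zero_or_eq_succ i with rfl | ⟨j, rfl⟩
        · rw [Fin.cons_zero] at he ⊢; exact hyconf e he
        · rw [Fin.cons_succ] at he ⊢
          have h1 : c j e = z' e := hcconf j e he
          have h2 : e ∈ support z' := hcsub j he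
          rw [hz'supp] at h2
          have hy0 : y e = 0 := by
            by_contra hcon; exact h2.2 hcon
          rw [h1, hz'app e, hy0]; ring
      · rw [Fin.sum_cons, ← hcsum, hz']; abel

lemma exists_conformal_cocircuit {w : G.E → ℝ} (hw : w ∈ cocycleSpace G) (hw0 : w ≠ 0) :
    ∃ y, IsDirCocycle G y ∧ support y ⊆ support w ∧ ∀ e ∈ support y, 0 < y e * w e :=
  exists_conformal_cocircuit_aux ((support w).ncard) w le_rfl hw hw0

lemma support_neg' (x : G.E → ℝ) : support (-x) = support x := by
  ext e; simp [Function.mem_support]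

lemma IsDirCycle.neg {x : G.E → ℝ} (h : IsDirCycle G x) : IsDirCycle G (-x) := by
  obtain ⟨h1, h2, h3, h4⟩ := h
  refine ⟨Submodule.neg_mem _ h1, neg_ne_zero.mpr h2, ?_, ?_⟩
  · intro e
    rcases h3 e with h | h | h
    · exact Or.inl (by simp [h])
    · exact Or.inr (Or.inr (by simp [h]))
    · exact Or.inr (Or.inl (by simp [h]))
  · intro y' hy1 hy2 hy3
    rw [support_neg'] at hy3 ⊢
    exact h4 y' hy1 hy2 hy3

lemma IsDirCocycle.neg {x : G.E → ℝ} (h : IsDirCocycle G x) : IsDirCocycle G (-x) := by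
  obtain ⟨h1, h2, h3, h4⟩ := h
  refine ⟨Submodule.neg_mem _ h1, neg_ne_zero.mpr h2, ?_, ?_⟩
  · intro e
    rcases h3 e with h | h | h
    · exact Or.inl (by simp [h])
    · exact Or.inr (Or.inr (by simp [h]))
    · exact Or.inr (Or.inl (by simp [h]))
  · intro y' hy1 hy2 hy3
    rw [support_neg'] at hy3 ⊢
    exact h4 y' hy1 hy2 hy3

lemma diff_dir {O1 O2 : G.E → ℝ} (h1 : IsOrientation G O1) (h2 : IsOrientation G O2)
    (e : G.E) (hne : O1 e - O2 e ≠ 0) :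
    O1 e - O2 e = dir G O1 e ∧ O2 e - O1 e = dir G O2 e := by
  rcases h1 e with ha | ha <;> rcases h2 e with hb | hb <;>
    simp [dir, ha, hb] at hne ⊢ <;> norm_num

lemma diff_zpm {O1 O2 : G.E → ℝ} (h1 : IsOrientation G O1) (h2 : IsOrientation G O2) :
    IsZPM G (O1 - O2) := by
  intro e
  rcases h1 e with ha | ha <;> rcases h2 e with hb | hb <;>
    simp [Pi.sub_apply, ha, hb]

/-- From a non-compatible orientation there is a reversible directed cycle or cocycle
whose reversal is the chosen σ-vector. -/
lemma not_compat_step {σc : CycSig G} {σs : CocycSig G} {O : G.E → ℝ}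
    (hnc : ¬ Compatible G σc σs O) :
    ∃ x, (IsDirCycle G x ∨ IsDirCocycle G x) ∧ InOrient G x O ∧
      ∃ C, (IsCycle G C ∧ -x = σc.s C) ∨ (IsCocycle G C ∧ -x = σs.s C) := by
  rw [Compatible, not_and_or] at hnc
  rcases hnc with h | h
  · rw [SigCompatible] at h
    push_neg at h
    obtain ⟨x, hx, hin, hne⟩ := h
    have hC : IsCycle G (support x) := ⟨x, hx, rfl⟩
    obtain ⟨hσdir, hσsupp⟩ := σc.mem _ hC
    have hpm := same_support_pm (M := cycleSpace G) hx.1 hx.2.1 hx.2.2.1 hx.2.2.2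
      hσdir.1 hσdir.2.2.1 hσsupp
    rcases hpm with hpm | hpm
    · exact absurd hpm hne
    · exact ⟨x, Or.inl hx, hin, support x, Or.inl ⟨hC, by conv_lhs => rw [hpm, neg_neg]⟩⟩
  · rw [CosigCompatible] at h
    push_neg at h
    obtain ⟨x, hx, hin, hne⟩ := h
    have hC : IsCocycle G (support x) := ⟨x, hx, rfl⟩
    obtain ⟨hσdir, hσsupp⟩ := σs.mem _ hC
    have hpm := same_support_pm (M := cocycleSpace G) hx.1 hx.2.1 hx.2.2.1 hx.2.2.2
      hσdir.1 hσdir.2.2.1 hσsupp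
    rcases hpm with hpm | hpm
    · exact absurd hpm hne
    · exact ⟨x, Or.inr hx, hin, support x, Or.inr ⟨hC, by conv_lhs => rw [hpm, neg_neg]⟩⟩

/-- Two compatible orientations in the same cycle-cocycle reversal class coincide. -/
lemma compat_unique {σc : CycSig G} {σs : CocycSig G} {O1 O2 : G.E → ℝ}
    (h1 : IsOrientation G O1) (h2 : IsOrientation G O2)
    (hc1 : Compatible G σc σs O1) (hc2 : Compatible G σc σs O2)
    (hs : SameCCClass G O1 O2) : O1 = O2 := by
  obtain ⟨z, b, hzM, hbM, hzi, hbi, hd⟩ := sameCCClass_diff hs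
  have hu : IsZPM G (O1 - O2) := diff_zpm h1 h2
  have hsplit := split_zpm (cycle_cocycle_dot hzM hbM) hzi hbi hu hd
  have husub : ∀ e, (O1 - O2) e = O1 e - O2 e := fun e => rfl
  have hz0 : z = 0 := by
    by_contra hz0
    obtain ⟨y, hydir, hysub, hyconf⟩ := exists_conformal_circuit hzM hz0
    have hzzpm : IsZPM G z := by
      intro e
      rcases hsplit e with ⟨h, _⟩ | ⟨h, _⟩
      · rw [h]; exact hu e
      · exact Or.inl h
    have hyeq : ∀ e ∈ support y, y e = z e :=
      fun e he => zpm_conf_eq (hydir.2.2.1 e) (hzzpm e) (hyconf e he)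
    have hzu : ∀ e, z e ≠ 0 → z e = O1 e - O2 e := by
      intro e he
      rcases hsplit e with ⟨h, _⟩ | ⟨h, _⟩
      · rw [h, husub e]
      · exact absurd h he
    have hyin1 : InOrient G y O1 := by
      intro e
      rcases eq_or_ne (y e) 0 with h | h
      · exact Or.inl h
      · right
        have he : e ∈ support y := h
        have h3 : z e ≠ 0 := by
          intro h4
          rw [hyeq e he, h4] at h
          exact h rfl
        rw [hyeq e he, hzu e h3]
        exact (diff_dir h1 h2 e (by rw [← hzu e h3]; exact h3)).1
    have hyin2 : InOrient G (-y) O2 := by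
      intro e
      rcases eq_or_ne (y e) 0 with h | h
      · exact Or.inl (by simp [h])
      · right
        have he : e ∈ support y := h
        have h3 : z e ≠ 0 := by
          intro h4
          rw [hyeq e he, h4] at h
          exact h rfl
        have h5 : (-y) e = O2 e - O1 e := by
          simp only [Pi.neg_apply]
          rw [hyeq e he, hzu e h3]
          ring
        rw [h5]
        exact (diff_dir h1 h2 e (by rw [← hzu e h3]; exact h3)).2
    have hcy1 : y = σc.s (support y) := hc1.1 y hydir hyin1
    have hcy2 : -y = σc.s (support (-y)) := hc2.1 (-y) hydir.neg hyin2
    rw [support_neg', ← hcy1] at hcy2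
    have : y = 0 := by
      funext e
      have h7 := congrFun hcy2 e
      simp only [Pi.neg_apply] at h7
      simp only [Pi.zero_apply]
      linarith
    exact hydir.2.1 this
  have hb0 : b = 0 := by
    by_contra hb0
    obtain ⟨y, hydir, hysub, hyconf⟩ := exists_conformal_cocircuit hbM hb0
    have hbzpm : IsZPM G b := by
      intro e
      rcases hsplit e with ⟨_, h⟩ | ⟨_, h⟩
      · exact Or.inl h
      · rw [h]; exact hu e
    have hyeq : ∀ e ∈ support y, y e = b e :=
      fun e he => zpm_conf_eq (hydir.2.2.1 e) (hbzpm e) (hyconf e he)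
    have hbu : ∀ e, b e ≠ 0 → b e = O1 e - O2 e := by
      intro e he
      rcases hsplit e with ⟨_, h⟩ | ⟨_, h⟩
      · exact absurd h he
      · rw [h, husub e]
    have hyin1 : InOrient G y O1 := by
      intro e
      rcases eq_or_ne (y e) 0 with h | h
      · exact Or.inl h
      · right
        have he : e ∈ support y := h
        have h3 : b e ≠ 0 := by
          intro h4
          rw [hyeq e he, h4] at h
          exact h rfl
        rw [hyeq e he, hbu e h3]
        exact (diff_dir h1 h2 e (by rw [← hbu e h3]; exact h3)).1
    have hyin2 : InOrient G (-y) O2 := by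
      intro e
      rcases eq_or_ne (y e) 0 with h | h
      · exact Or.inl (by simp [h])
      · right
        have he : e ∈ support y := h
        have h3 : b e ≠ 0 := by
          intro h4
          rw [hyeq e he, h4] at h
          exact h rfl
        have h5 : (-y) e = O2 e - O1 e := by
          simp only [Pi.neg_apply]
          rw [hyeq e he, hbu e h3]
          ring
        rw [h5]
        exact (diff_dir h1 h2 e (by rw [← hbu e h3]; exact h3)).2
    have hcy1 : y = σs.s (support y) := hc1.2 y hydir hyin1
    have hcy2 : -y = σs.s (support (-y)) := hc2.2 (-y) hydir.neg hyin2
    rw [support_neg', ← hcy1] at hcy2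
    have : y = 0 := by
      funext e
      have h7 := congrFun hcy2 e
      simp only [Pi.neg_apply] at h7
      simp only [Pi.zero_apply]
      linarith
    exact hydir.2.1 this
  rw [hz0, hb0] at hd
  have : O1 - O2 = 0 := by rw [hd]; abel
  exact sub_eq_zero.mp this

lemma exists_compatible {σc : CycSig G} {σs : CocycSig G}
    (hac : AcyclicSig G σc) (hacs : AcyclicCosig G σs)
    {O : G.E → ℝ} (hO : IsOrientation G O) :
    ∃ Ocp, IsOrientation G Ocp ∧ Compatible G σc σs Ocp ∧ SameCCClass G O Ocp := by
  by_contra hno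
  push_neg at hno
  set step : (G.E → ℝ) → (G.E → ℝ) := fun O' =>
    if h : ¬ Compatible G σc σs O' then O' - (not_compat_step h).choose else O'
    with hstepdef
  set f : ℕ → (G.E → ℝ) := fun n => step^[n] O with hfdef
  have hf0 : f 0 = O := rfl
  have hfsucc : ∀ n, f (n+1) = step (f n) := fun n => Function.iterate_succ_apply' step n O
  have hinv : ∀ n, IsOrientation G (f n) ∧ SameCCClass G O (f n) := by
    intro n
    induction n with
    | zero => exact ⟨hO, Relation.EqvGen.refl O⟩
    | succ n ih =>
      have hnc : ¬ Compatible G σc σs (f n) := fun hcomp => hno (f n) ih.1 hcomp ih.2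
      have hx := (not_compat_step (σc := σc) (σs := σs) hnc).choose_spec
      have hstep : f (n+1) = f n - (not_compat_step hnc).choose := by
        rw [hfsucc n, hstepdef]
        beta_reduce
        rw [dif_pos hnc]
      constructor
      · rw [hstep]; exact orient_sub ih.1 hx.2.1
      · exact Relation.EqvGen.trans _ _ _ ih.2
          (Relation.EqvGen.rel _ _ ⟨_, hx.1, hx.2.1, hstep⟩)
  have hdiff : ∀ n, ∃ C, (IsCycle G C ∧ f (n+1) - f n = σc.s C) ∨
      (IsCocycle G C ∧ f (n+1) - f n = σs.s C) := by
    intro n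
    have hnc : ¬ Compatible G σc σs (f n) := fun hcomp => hno (f n) (hinv n).1 hcomp (hinv n).2
    have hx := (not_compat_step (σc := σc) (σs := σs) hnc).choose_spec
    have hstep : f (n+1) = f n - (not_compat_step hnc).choose := by
      rw [hfsucc n, hstepdef]
      beta_reduce
      rw [dif_pos hnc]
    have hd : f (n+1) - f n = -(not_compat_step hnc).choose := by rw [hstep]; abel
    obtain ⟨C, hC⟩ := hx.2.2
    rcases hC with ⟨hC1, hC2⟩ | ⟨hC1, hC2⟩
    · exact ⟨C, Or.inl ⟨hC1, by rw [hd]; exact hC2⟩⟩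
    · exact ⟨C, Or.inr ⟨hC1, by rw [hd]; exact hC2⟩⟩
  -- pigeonhole
  haveI := Classical.propDecidable
  have key : ∀ m n : ℕ, m < n → f m = f n → False := by
    intro m n hmn hfeq
    have htel : ∑ k ∈ Finset.Ico m n, (f (k+1) - f k) = 0 := by
      rw [Finset.sum_Ico_eq_sub _ hmn.le, Finset.sum_range_sub (fun k => f k),
        Finset.sum_range_sub (fun k => f k), hfeq]
      abel
    classical
    set Cs : ℕ → Set G.E := fun k => (hdiff k).choose with hCsdef
    have hCs := fun k => (hdiff k).choose_spec
    set p : ℕ → Prop := fun k => IsCycle G (Cs k) ∧ f (k+1) - f k = σc.s (Cs k) with hpdef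
    set Kc := (Finset.Ico m n).filter p with hKc
    set Ks := (Finset.Ico m n).filter (fun k => ¬ p k) with hKs
    have hKsprop : ∀ k ∈ Ks, IsCocycle G (Cs k) ∧ f (k+1) - f k = σs.s (Cs k) := by
      intro k hk
      have hnp : ¬ p k := (Finset.mem_filter.mp hk).2
      rcases hCs k with h | h
      · exact absurd h hnp
      · exact h
    have hsplitsum : ∑ k ∈ Kc, (f (k+1) - f k) + ∑ k ∈ Ks, (f (k+1) - f k) = 0 := by
      rw [hKc, hKs, Finset.sum_filter_add_sum_filter_not, htel]
    set v1 := ∑ k ∈ Kc, σc.s (Cs k) with hv1def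
    set v2 := ∑ k ∈ Ks, σs.s (Cs k) with hv2def
    have hv1 : ∑ k ∈ Kc, (f (k+1) - f k) = v1 :=
      Finset.sum_congr rfl fun k hk => (Finset.mem_filter.mp hk).2.2
    have hv2 : ∑ k ∈ Ks, (f (k+1) - f k) = v2 :=
      Finset.sum_congr rfl fun k hk => (hKsprop k hk).2
    have hv12 : v1 + v2 = 0 := by rw [← hv1, ← hv2]; exact hsplitsum
    have hv1M : v1 ∈ cycleSpace G :=
      Submodule.sum_mem _ fun k hk => (σc.mem _ (Finset.mem_filter.mp hk).2.1).1.1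
    have hv2M : v2 ∈ cocycleSpace G :=
      Submodule.sum_mem _ fun k hk => (σs.mem _ (hKsprop k hk).1).1.1
    have hv1B : v1 ∈ cocycleSpace G := by
      rw [eq_neg_of_add_eq_zero_left hv12]
      exact Submodule.neg_mem _ hv2M
    have hv10 : v1 = 0 := cycle_cocycle_inter hv1M hv1B
    have hv20 : v2 = 0 := by
      rw [eq_neg_of_add_eq_zero_right hv12, hv10, neg_zero]
    -- acyclicity contradiction
    have hmIco : m ∈ Finset.Ico m n := Finset.mem_Ico.mpr ⟨le_rfl, hmn⟩
    by_cases hm : p m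
    · -- cycle-type step at m
      set a : Set G.E → ℝ := fun C => ((Kc.filter (fun k => Cs k = C)).card : ℝ) with hadef
      have ha0 : ∀ C, 0 ≤ a C := fun C => Nat.cast_nonneg _
      have hfib : ∀ (t : Finset (Set G.E)), (∀ k ∈ Kc, Cs k ∈ t) →
          ∑ C ∈ t, a C • σc.s C = v1 := by
        intro t ht
        rw [hv1def, ← Finset.sum_fiberwise_of_maps_to ht (fun k => σc.s (Cs k))]
        refine Finset.sum_congr rfl fun C _ => ?_
        rw [Finset.sum_congr rfl (fun k hk => by
          rw [(Finset.mem_filter.mp hk).2] : ∀ k ∈ Kc.filter (fun k => Cs k = C),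
            σc.s (Cs k) = σc.s C), Finset.sum_const, hadef]
        exact (Nat.cast_smul_eq_nsmul ℝ _ _)
      have hsum0 : ∑ C ∈ Finset.univ.filter (fun C => IsCycle G C), a C • σc.s C = 0 := by
        rw [hfib _ (fun k hk => Finset.mem_filter.mpr
          ⟨Finset.mem_univ _, (Finset.mem_filter.mp hk).2.1⟩), hv10]
      have hall : ∀ C, IsCycle G C → a C = 0 := by
        refine hac a ha0 ?_
        convert hsum0 using 2
        first
          | exact Finset.filter_congr_decidable _ _ _
          | exact (Finset.filter_congr_decidable _ _ _).symm
          | (congr 1; exact Subsingleton.elim _ _)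
      have hCm : IsCycle G (Cs m) := hm.1
      have ham := hall (Cs m) hCm
      have hmem : m ∈ Kc.filter (fun k => Cs k = Cs m) :=
        Finset.mem_filter.mpr ⟨Finset.mem_filter.mpr ⟨hmIco, hm⟩, rfl⟩
      have hcard : 0 < (Kc.filter (fun k => Cs k = Cs m)).card :=
        Finset.card_pos.mpr ⟨m, hmem⟩
      rw [hadef] at ham
      simp only at ham
      have : (0:ℝ) < ((Kc.filter (fun k => Cs k = Cs m)).card : ℝ) := by
        exact_mod_cast hcard
      rw [ham] at this
      exact lt_irrefl 0 this
    · -- cocycle-type step at m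
      have hmKs : m ∈ Ks := Finset.mem_filter.mpr ⟨hmIco, hm⟩
      set a : Set G.E → ℝ := fun C => ((Ks.filter (fun k => Cs k = C)).card : ℝ) with hadef
      have ha0 : ∀ C, 0 ≤ a C := fun C => Nat.cast_nonneg _
      have hfib : ∀ (t : Finset (Set G.E)), (∀ k ∈ Ks, Cs k ∈ t) →
          ∑ C ∈ t, a C • σs.s C = v2 := by
        intro t ht
        rw [hv2def, ← Finset.sum_fiberwise_of_maps_to ht (fun k => σs.s (Cs k))]
        refine Finset.sum_congr rfl fun C _ => ?_
        rw [Finset.sum_congr rfl (fun k hk => by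
          rw [(Finset.mem_filter.mp hk).2] : ∀ k ∈ Ks.filter (fun k => Cs k = C),
            σs.s (Cs k) = σs.s C), Finset.sum_const, hadef]
        exact (Nat.cast_smul_eq_nsmul ℝ _ _)
      have hsum0 : ∑ C ∈ Finset.univ.filter (fun C => IsCocycle G C), a C • σs.s C = 0 := by
        rw [hfib _ (fun k hk => Finset.mem_filter.mpr
          ⟨Finset.mem_univ _, (hKsprop k hk).1⟩), hv20]
      have hall : ∀ C, IsCocycle G C → a C = 0 := by
        refine hacs a ha0 ?_
        convert hsum0 using 2
        first
          | exact Finset.filter_congr_decidable _ _ _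
          | exact (Finset.filter_congr_decidable _ _ _).symm
          | (congr 1; exact Subsingleton.elim _ _)
      have hCm : IsCocycle G (Cs m) := (hKsprop m hmKs).1
      have ham := hall (Cs m) hCm
      have hmem : m ∈ Ks.filter (fun k => Cs k = Cs m) :=
        Finset.mem_filter.mpr ⟨hmKs, rfl⟩
      have hcard : 0 < (Ks.filter (fun k => Cs k = Cs m)).card :=
        Finset.card_pos.mpr ⟨m, hmem⟩
      rw [hadef] at ham
      simp only at ham
      have : (0:ℝ) < ((Ks.filter (fun k => Cs k = Cs m)).card : ℝ) := by
        exact_mod_cast hcard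
      rw [ham] at this
      exact lt_irrefl 0 this
  -- f is injective, impossible into a finite set
  set ψ : ℕ → (G.E → Bool) := fun n e => if f n e = 1 then true else false with hψdef
  obtain ⟨m', n', hne', hψeq⟩ := Finite.exists_ne_map_eq_of_infinite ψ
  have hrec : ∀ m n : ℕ, ψ m = ψ n → f m = f n := by
    intro m n hψeq
    funext e
    have hb := congrFun hψeq e
    rw [hψdef] at hb
    beta_reduce at hb
    rcases (hinv m).1 e with h1 | h1 <;> rcases (hinv n).1 e with h2 | h2 <;>
      rw [h1, h2] at hb ⊢ <;> first | rfl | norm_num at hb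
  rcases hne'.lt_or_gt with h | h
  · exact key m' n' h (hrec m' n' hψeq)
  · exact key n' m' h (hrec n' m' hψeq.symm)

end GB

open GB in
theorem stmt_6 (G : GB.Graph) (hconn : GB.Connected G)
    (σc : GB.CycSig G) (σs : GB.CocycSig G)
    (hac : GB.AcyclicSig G σc) (hacs : GB.AcyclicCosig G σs)
    (O : G.E → ℝ) (hO : GB.IsOrientation G O) :
    ∃ Ocp : G.E → ℝ,
      (GB.IsOrientation G Ocp ∧ GB.Compatible G σc σs Ocp ∧ GB.SameCCClass G O Ocp ∧
        ∃ (n m : ℕ) (c : Fin n → (G.E → ℝ)) (d : Fin m → (G.E → ℝ)),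
          (∀ i, GB.IsDirCycle G (c i) ∧ GB.InOrient G (c i) Ocp) ∧
          (∀ j, GB.IsDirCocycle G (d j) ∧ GB.InOrient G (d j) Ocp) ∧
          (∀ i j, i ≠ j → Disjoint (Function.support (c i)) (Function.support (c j))) ∧
          (∀ i j, i ≠ j → Disjoint (Function.support (d i)) (Function.support (d j))) ∧
          (∀ i j, Disjoint (Function.support (c i)) (Function.support (d j))) ∧
          O = Ocp - (∑ i, c i) - (∑ j, d j)) ∧
      (∀ O' : G.E → ℝ, GB.IsOrientation G O' → GB.Compatible G σc σs O' →
        GB.SameCCClass G O O' → O' = Ocp) := by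
  obtain ⟨Ocp, hOcpOr, hOcpCompat, hOcpCC⟩ := GB.exists_compatible hac hacs hO
  refine ⟨Ocp, ⟨hOcpOr, hOcpCompat, hOcpCC, ?_⟩, ?_⟩
  · obtain ⟨z, b, hzM, hbM, hzi, hbi, hd⟩ :=
      GB.sameCCClass_diff (Relation.EqvGen.symm _ _ hOcpCC)
    have hu : GB.IsZPM G (Ocp - O) := GB.diff_zpm hOcpOr hO
    have hsplit := GB.split_zpm (GB.cycle_cocycle_dot hzM hbM) hzi hbi hu hd
    have hzzpm : GB.IsZPM G z := by
      intro e
      rcases hsplit e with ⟨h, _⟩ | ⟨h, _⟩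
      · rw [h]; exact hu e
      · exact Or.inl h
    have hbzpm : GB.IsZPM G b := by
      intro e
      rcases hsplit e with ⟨_, h⟩ | ⟨_, h⟩
      · exact Or.inl h
      · rw [h]; exact hu e
    obtain ⟨k, c, hcdir, hcdisj, hcsub, hcconf, hcsum⟩ :=
      GB.decomp_aux (GB.cycleSpace G) (GB.IsDirCycle G)
        (fun y hy => hy.1) (fun y hy => hy.2.1) (fun y hy => hy.2.2.1)
        (fun z' h1 h2 => GB.exists_conformal_circuit h1 h2)
        ((Function.support z).ncard) z le_rfl hzM hzzpm
    obtain ⟨k', d, hddir, hddisj, hdsub, hdconf, hdsum⟩ :=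
      GB.decomp_aux (GB.cocycleSpace G) (GB.IsDirCocycle G)
        (fun y hy => hy.1) (fun y hy => hy.2.1) (fun y hy => hy.2.2.1)
        (fun b' h1 h2 => GB.exists_conformal_cocircuit h1 h2)
        ((Function.support b).ncard) b le_rfl hbM hbzpm
    have hzdir : ∀ e, z e ≠ 0 → z e = GB.dir G Ocp e := by
      intro e he
      rcases hsplit e with ⟨h, _⟩ | ⟨h, _⟩
      · have hne : Ocp e - O e ≠ 0 := by
          have h2 : (Ocp - O) e = Ocp e - O e := rfl
          rw [← h2, ← h]
          exact he
        rw [h]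
        exact (GB.diff_dir hOcpOr hO e hne).1
      · exact absurd h he
    have hbdir : ∀ e, b e ≠ 0 → b e = GB.dir G Ocp e := by
      intro e he
      rcases hsplit e with ⟨_, h⟩ | ⟨_, h⟩
      · exact absurd h he
      · have hne : Ocp e - O e ≠ 0 := by
          have h2 : (Ocp - O) e = Ocp e - O e := rfl
          rw [← h2, ← h]
          exact he
        rw [h]
        exact (GB.diff_dir hOcpOr hO e hne).1
    refine ⟨k, k', c, d, ?_, ?_, hcdisj, hddisj, ?_, ?_⟩
    · intro i
      refine ⟨hcdir i, ?_⟩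
      intro e
      rcases eq_or_ne (c i e) 0 with h | h
      · exact Or.inl h
      · right
        have he : e ∈ Function.support (c i) := h
        have h1 : c i e = z e := hcconf i e he
        have h2 : z e ≠ 0 := by rw [← h1]; exact h
        rw [h1]
        exact hzdir e h2
    · intro j
      refine ⟨hddir j, ?_⟩
      intro e
      rcases eq_or_ne (d j e) 0 with h | h
      · exact Or.inl h
      · right
        have he : e ∈ Function.support (d j) := h
        have h1 : d j e = b e := hdconf j e he
        have h2 : b e ≠ 0 := by rw [← h1]; exact h
        rw [h1]
        exact hbdir e h2
    · intro i j
      rw [Set.disjoint_left]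
      intro e he hein
      have h1 : z e ≠ 0 := hcsub i he
      have h2 : b e ≠ 0 := hdsub j hein
      rcases hsplit e with ⟨_, h⟩ | ⟨h, _⟩
      · exact h2 h
      · exact h1 h
    · have hO' : O = Ocp - (z + b) := by rw [← hd]; abel
      rw [← hcsum, ← hdsum, hO']
      abel
  · intro O' hO' hcomp' hsame'
    have hsc : GB.SameCCClass G O' Ocp :=
      Relation.EqvGen.trans _ _ _ (Relation.EqvGen.symm _ _ hsame') hOcpCC
    exact GB.compat_unique hO' hOcpOr hcomp' hOcpCompat hsc
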